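/- Let ε > 0 and let A_1, …, A_I be events in a probability space such that P(A_i ∩ A_j) ≤ P(A_i)·P(A_j)·(1+ε) for all i ≠ j, and ∑_i P(A_i) ≥ 1/ε. Then P(⋃_i A_i) ≥ 1 − 2ε. -/

import Mathlib

open MeasureTheory
open scoped ENNReal

/-- Second moment method lemma: if events are pairwise nearly independent
(`P(A_i ∩ A_j) ≤ P(A_i)P(A_j)(1+ε)` for `i ≠ j`) and `∑ P(A_i) ≥ 1/ε`, then
`P(⋃ A_i) ≥ 1 - 2ε`. -/
theorem stmt0 {Ω : Type*} [MeasurableSpace Ω] (μ : Measure Ω) [IsProbabilityMeasure μ]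
    (ε : ℝ) (hε : 0 < ε) (I : ℕ) (A : Fin I → Set Ω)
    (hmeas : ∀ i, MeasurableSet (A i))
    (hpair : ∀ i j, i ≠ j →
      (μ (A i ∩ A j)).toReal ≤ (μ (A i)).toReal * (μ (A j)).toReal * (1 + ε))
    (hsum : 1 / ε ≤ ∑ i, (μ (A i)).toReal) :
    1 - 2 * ε ≤ (μ (⋃ i, A i)).toReal := by
  set U := ⋃ i, A i with hU
  have hUmeas : MeasurableSet U := MeasurableSet.iUnion hmeas
  set f : Ω → ℝ≥0∞ := fun ω => ∑ i, (A i).indicator 1 ω with hf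
  have hfmeas : Measurable f := by
    apply Finset.measurable_sum
    exact fun i _ => (measurable_one.indicator (hmeas i))
  have hint1 : ∫⁻ ω, f ω ∂μ = ∑ i, μ (A i) := by
    rw [hf, lintegral_finset_sum _ fun i _ => measurable_one.indicator (hmeas i)]
    simp [lintegral_indicator_one (hmeas _)]
  have hsq : ∀ ω, f ω * f ω = ∑ i, ∑ j, (A i ∩ A j).indicator 1 ω := by
    intro ω
    rw [hf, Finset.sum_mul_sum]
    simp [Set.inter_indicator_one]
  have hint2 : ∫⁻ ω, f ω * f ω ∂μ = ∑ i, ∑ j, μ (A i ∩ A j) := by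
    simp_rw [hsq]
    rw [lintegral_finset_sum _ fun i _ => Finset.measurable_sum _ fun j _ =>
      measurable_one.indicator ((hmeas i).inter (hmeas j))]
    congr 1; ext i
    rw [lintegral_finset_sum _ fun j _ => measurable_one.indicator ((hmeas i).inter (hmeas j))]
    simp [lintegral_indicator_one ((hmeas i).inter (hmeas _))]
  have hfU : ∀ ω, f ω = (f ω * U.indicator 1 ω) := by
    intro ω
    by_cases h : ω ∈ U
    · simp [Set.indicator_of_mem h]
    · have : ∀ i, ω ∉ A i := by
        intro i hi; exact h (Set.mem_iUnion.2 ⟨i, hi⟩)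
      simp [hf, Set.indicator_of_notMem (this _), Set.indicator_of_notMem h]
  have hCS : (∑ i, μ (A i)) ≤ (∫⁻ ω, f ω ^ (2:ℝ) ∂μ) ^ (1/2 : ℝ) * (∫⁻ ω, (U.indicator 1 ω) ^ (2:ℝ) ∂μ) ^ (1/2 : ℝ) := by
    rw [← hint1]
    calc ∫⁻ ω, f ω ∂μ = ∫⁻ ω, (f ω * U.indicator 1 ω) ∂μ := by
          exact lintegral_congr fun ω => hfU ω
      _ ≤ _ := ENNReal.lintegral_mul_le_Lp_mul_Lq μ ((Real.holderConjugate_iff.2 ⟨one_lt_two, by norm_num⟩ : Real.HolderConjugate 2 2))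
          hfmeas.aemeasurable ((measurable_one.indicator hUmeas)).aemeasurable
  -- rewrite the exponents
  have h2 : ∫⁻ ω, f ω ^ (2:ℝ) ∂μ = ∑ i, ∑ j, μ (A i ∩ A j) := by
    rw [← hint2]; apply lintegral_congr; intro ω
    rw [show (2:ℝ) = ((2:ℕ):ℝ) by norm_num, ENNReal.rpow_natCast, sq]
  have h3 : ∫⁻ ω, (U.indicator 1 ω) ^ (2:ℝ) ∂μ = μ U := by
    rw [← lintegral_indicator_one hUmeas]; apply lintegral_congr; intro ω
    by_cases h : ω ∈ U
    · simp [Set.indicator_of_mem h]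
    · simp [Set.indicator_of_notMem h, ENNReal.zero_rpow_of_pos]
  rw [h2, h3] at hCS
  set S := ∑ i, μ (A i) with hS
  set T := ∑ i, ∑ j, μ (A i ∩ A j) with hT
  have key : S * S ≤ T * μ U := by
    calc S * S ≤ (T ^ (1/2:ℝ) * μ U ^ (1/2:ℝ)) * (T ^ (1/2:ℝ) * μ U ^ (1/2:ℝ)) :=
          mul_le_mul' hCS hCS
      _ = (T ^ (1/2:ℝ) * T ^ (1/2:ℝ)) * (μ U ^ (1/2:ℝ) * μ U ^ (1/2:ℝ)) := by ring
      _ = T * μ U := by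
          rw [← ENNReal.rpow_add_of_nonneg _ _ (by norm_num) (by norm_num),
            ← ENNReal.rpow_add_of_nonneg _ _ (by norm_num) (by norm_num)]
          norm_num
  -- pass to reals
  have hTne : T ≠ ⊤ := by
    rw [← lt_top_iff_ne_top, hT]
    exact ENNReal.sum_lt_top.2 fun i _ => ENNReal.sum_lt_top.2 fun j _ => measure_lt_top μ _
  have hSne : S ≠ ⊤ := by
    rw [← lt_top_iff_ne_top, hS]
    exact ENNReal.sum_lt_top.2 fun i _ => measure_lt_top μ _
  have keyR : S.toReal * S.toReal ≤ T.toReal * (μ U).toReal := by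
    rw [← ENNReal.toReal_mul, ← ENNReal.toReal_mul]
    exact ENNReal.toReal_mono (ENNReal.mul_ne_top hTne (measure_ne_top μ U)) key
  have hSr : S.toReal = ∑ i, (μ (A i)).toReal := ENNReal.toReal_sum fun i _ => measure_ne_top μ _
  set Sr := ∑ i, (μ (A i)).toReal with hSrdef
  have hTr : T.toReal ≤ Sr + (1 + ε) * (Sr * Sr) := by
    have : T.toReal = ∑ i, ∑ j, (μ (A i ∩ A j)).toReal := by
      rw [hT, ENNReal.toReal_sum fun i _ => (by rw [← lt_top_iff_ne_top]; exact ENNReal.sum_lt_top.2 fun j _ => measure_lt_top μ _)]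
      exact Finset.sum_congr rfl fun i _ => ENNReal.toReal_sum fun j _ => measure_ne_top μ _
    rw [this]
    have hbd : ∀ i j : Fin I, (μ (A i ∩ A j)).toReal ≤
        (μ (A i)).toReal * (μ (A j)).toReal * (1 + ε) + (if j = i then (μ (A i)).toReal else 0) := by
      intro i j
      by_cases h : i = j
      · subst h; rw [Set.inter_self, if_pos rfl]
        nlinarith [ENNReal.toReal_nonneg (a := μ (A i)), hε]
      · simp only [if_neg (Ne.symm h), add_zero]
        exact hpair i j h
    calc ∑ i, ∑ j, (μ (A i ∩ A j)).toReal
        ≤ ∑ i, ∑ j, ((μ (A i)).toReal * (μ (A j)).toReal * (1 + ε) + (if j = i then (μ (A i)).toReal else 0)) :=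
          Finset.sum_le_sum fun i _ => Finset.sum_le_sum fun j _ => hbd i j
      _ = Sr + (1 + ε) * (Sr * Sr) := by
          simp_rw [Finset.sum_add_distrib]
          have e1 : ∑ x : Fin I, ∑ y : Fin I,
              (μ (A x)).toReal * (μ (A y)).toReal * (1 + ε) = (1 + ε) * (Sr * Sr) := by
            simp_rw [← Finset.sum_mul, ← Finset.sum_mul_sum]
            ring
          have e2 : ∑ x : Fin I, ∑ y : Fin I,
              (if y = x then (μ (A x)).toReal else 0) = Sr := by
            simp [Finset.sum_ite_eq', hSrdef]
          rw [e1, e2]; ring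
  -- final arithmetic
  rw [hSr] at keyR
  have hSr_pos : 0 < Sr := lt_of_lt_of_le (by positivity) hsum
  have hεS : 1 ≤ ε * Sr := by
    rw [div_le_iff₀ hε] at hsum; linarith [hsum]
  have hur : 0 ≤ (μ U).toReal := ENNReal.toReal_nonneg
  have hTr0 : 0 ≤ T.toReal := ENNReal.toReal_nonneg
  nlinarith [mul_le_mul_of_nonneg_right hTr hur, mul_pos hSr_pos hSr_pos,
    mul_nonneg (mul_nonneg hur hε.le) hSr_pos.le, sq_nonneg Sr,
    mul_nonneg hur hSr_pos.le]
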